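/- Let κ > 0, α > 0 and δ < 0. Then sup_{x₁ ∈ [0, ℓ_ε)} |H_ε(μ_ε(x₁)) − H₀(μ₀(x₁))| → 0 as ε → 0⁺. (Since μ_ε′ = H_ε(μ_ε) and μ₀′ = H₀(μ₀), this is the uniform convergence of the derivatives of μ_ε to that of μ₀ on [0, ℓ_ε).) -/

import Mathlib

open Set MeasureTheory intervalIntegral

section aux
variable {κ α : ℝ}

lemma cont_fe (hκ : 0 < κ) (hα : 0 < α) {ε : ℝ} (hε : 0 < ε) :
    Continuous (fun s : ℝ => 1 / (κ * |s| ^ (1 + α) + ε)) := by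
  apply Continuous.div continuous_const
  · exact (continuous_const.mul (continuous_abs.rpow_const (fun x => Or.inr (by positivity)))).add
      continuous_const
  · intro s
    have h1 : (0:ℝ) ≤ |s| ^ (1 + α) := Real.rpow_nonneg (abs_nonneg s) _
    positivity

lemma contOn_f0 (hκ : 0 < κ) (hα : 0 < α) {ξ : ℝ} (hξ : ξ < 0) :
    ContinuousOn (fun s : ℝ => 1 / (κ * |s| ^ (1 + α))) (Iic ξ) := by
  apply ContinuousOn.div continuousOn_const
  · exact (continuous_const.mul (continuous_abs.rpow_const (fun x => Or.inr (by positivity)))).continuousOn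
  · intro s hs
    have hs0 : s < 0 := lt_of_le_of_lt hs hξ
    have h1 : (0:ℝ) < |s| := abs_pos.2 hs0.ne
    have : (0:ℝ) < |s| ^ (1 + α) := Real.rpow_pos_of_pos h1 _
    positivity

lemma int_f0 (hκ : 0 < κ) (hα : 0 < α) {δ ξ : ℝ} (hδξ : δ ≤ ξ) (hξ : ξ < 0) :
    IntervalIntegrable (fun s : ℝ => 1 / (κ * |s| ^ (1 + α))) volume δ ξ :=
  ((contOn_f0 hκ hα hξ).mono (by rw [uIcc_of_le hδξ]; exact Icc_subset_Iic_self)).intervalIntegrable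

/-- FTC evaluation of ρ₀. -/
lemma rho0_eq (hκ : 0 < κ) (hα : 0 < α) {δ ξ : ℝ} (hδξ : δ ≤ ξ) (hξ : ξ < 0) :
    ∫ s in δ..ξ, 1 / (κ * |s| ^ (1 + α)) = ((-ξ) ^ (-α) - (-δ) ^ (-α)) / (α * κ) := by
  have key : ∀ s ∈ uIcc δ ξ,
      HasDerivAt (fun t : ℝ => (-t) ^ (-α) / (α * κ)) (1 / (κ * |s| ^ (1 + α))) s := by
    intro s hs
    rw [uIcc_of_le hδξ] at hs
    have hs0 : s < 0 := lt_of_le_of_lt hs.2 hξ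
    have hns : (0:ℝ) < -s := by linarith
    have h1 : HasDerivAt (fun t : ℝ => -t) (-1) s := (hasDerivAt_id s).neg
    have h2 : HasDerivAt (fun y : ℝ => y ^ (-α)) ((-α) * (-s) ^ (-α - 1)) (-s) :=
      Real.hasDerivAt_rpow_const (Or.inl hns.ne')
    have h3 := (h2.comp s h1).div_const (α * κ)
    refine h3.congr_deriv ?_
    have habs : |s| = -s := abs_of_neg hs0
    have hpow : (-s) ^ (-α - 1) = ((-s) ^ (1 + α))⁻¹ := by
      rw [show -α - 1 = -(1 + α) by ring, Real.rpow_neg hns.le]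
    have hne : ((-s) : ℝ) ^ (1 + α) ≠ 0 := (Real.rpow_pos_of_pos hns _).ne'
    rw [habs, hpow]
    field_simp
  rw [intervalIntegral.integral_eq_sub_of_hasDerivAt key (int_f0 hκ hα hδξ hξ)]
  rw [div_sub_div_same]

lemma rho_mono_eps (hκ : 0 < κ) (hα : 0 < α) {δ ξ ε : ℝ} (hε : 0 < ε)
    (hδξ : δ ≤ ξ) (hξ : ξ < 0) :
    ∫ s in δ..ξ, 1 / (κ * |s| ^ (1 + α) + ε) ≤ ∫ s in δ..ξ, 1 / (κ * |s| ^ (1 + α)) := by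
  apply intervalIntegral.integral_mono_on hδξ ((cont_fe hκ hα hε).intervalIntegrable _ _)
    (int_f0 hκ hα hδξ hξ)
  intro s hs
  have hs0 : s < 0 := lt_of_le_of_lt hs.2 hξ
  have h1 : (0:ℝ) < |s| := abs_pos.2 hs0.ne
  have h2 : (0:ℝ) < κ * |s| ^ (1 + α) := by
    have := Real.rpow_pos_of_pos h1 (1 + α); positivity
  exact one_div_le_one_div_of_le h2 (by linarith)

/-- error bound on ρ₀ - ρ_ε for ξ ≤ -c. -/
lemma err_le (hκ : 0 < κ) (hα : 0 < α) {δ ξ ε c : ℝ} (hε : 0 < ε) (hc : 0 < c)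
    (hδ : δ < 0) (hδξ : δ ≤ ξ) (hξc : ξ ≤ -c) :
    (∫ s in δ..ξ, 1 / (κ * |s| ^ (1 + α))) - ∫ s in δ..ξ, 1 / (κ * |s| ^ (1 + α) + ε)
      ≤ (-δ) * (ε / (κ * c ^ (1 + α) * (κ * c ^ (1 + α)))) := by
  have hξ : ξ < 0 := lt_of_le_of_lt hξc (by linarith)
  have hd0 : (0:ℝ) < κ * c ^ (1 + α) := by
    have := Real.rpow_pos_of_pos hc (1 + α); positivity
  set C : ℝ := ε / (κ * c ^ (1 + α) * (κ * c ^ (1 + α))) with hC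
  have hCpos : 0 < C := by positivity
  have h1 : (∫ s in δ..ξ, (1 / (κ * |s| ^ (1 + α)) - 1 / (κ * |s| ^ (1 + α) + ε)))
      ≤ ∫ _s in δ..ξ, C := by
    apply intervalIntegral.integral_mono_on hδξ
      ((int_f0 hκ hα hδξ hξ).sub ((cont_fe hκ hα hε).intervalIntegrable _ _))
      intervalIntegrable_const
    intro s hs
    have hs0 : s < 0 := lt_of_le_of_lt hs.2 hξ
    have habs : |s| = -s := abs_of_neg hs0
    have hsc : c ≤ |s| := by rw [habs]; linarith [hs.2]
    set d : ℝ := κ * |s| ^ (1 + α) with hd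
    have hd1 : κ * c ^ (1 + α) ≤ d := by
      have := Real.rpow_le_rpow hc.le hsc (by positivity : (0:ℝ) ≤ 1 + α)
      exact mul_le_mul_of_nonneg_left this hκ.le
    have hdpos : 0 < d := lt_of_lt_of_le hd0 hd1
    have key : 1 / d - 1 / (d + ε) = ε / (d * (d + ε)) := by
      field_simp
      ring
    rw [key, hC]
    gcongr
    · linarith
  rw [intervalIntegral.integral_sub (int_f0 hκ hα hδξ hξ)
      ((cont_fe hκ hα hε).intervalIntegrable _ _)] at h1
  calc _ ≤ ∫ _s in δ..ξ, C := h1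
    _ = (ξ - δ) * C := by rw [intervalIntegral.integral_const, smul_eq_mul]
    _ ≤ (-δ) * C := by nlinarith

/-- Lipschitz bound for t ↦ t^(-β) on [A₀, ∞). -/
lemma lip_rpow {A₀ β A B : ℝ} (hA₀ : 0 < A₀) (hβ : 0 < β) (hA : A₀ ≤ A) (hAB : A ≤ B) :
    A ^ (-β) - B ^ (-β) ≤ β * A₀ ^ (-β - 1) * (B - A) := by
  have hbound : ∀ t ∈ Ici A₀, ‖(-β) * t ^ (-β - 1)‖ ≤ β * A₀ ^ (-β - 1) := by
    intro t ht
    have htpos : 0 < t := lt_of_lt_of_le hA₀ ht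
    have h1 : t ^ (-β - 1) ≤ A₀ ^ (-β - 1) :=
      Real.rpow_le_rpow_of_nonpos hA₀ ht (by linarith)
    have h2 : (0:ℝ) ≤ t ^ (-β - 1) := (Real.rpow_pos_of_pos htpos _).le
    rw [norm_mul, Real.norm_eq_abs, Real.norm_eq_abs, abs_of_neg (by linarith : -β < 0),
      abs_of_nonneg h2]
    nlinarith
  have hderiv : ∀ t ∈ Ici A₀, HasDerivWithinAt (fun t : ℝ => t ^ (-β))
      ((-β) * t ^ (-β - 1)) (Ici A₀) t := by
    intro t ht
    have htpos : 0 < t := lt_of_lt_of_le hA₀ ht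
    exact (Real.hasDerivAt_rpow_const (Or.inl htpos.ne')).hasDerivWithinAt
  have := Convex.norm_image_sub_le_of_norm_hasDerivWithin_le hderiv hbound
    (convex_Ici A₀) (mem_Ici.2 hA) (mem_Ici.2 (hA.trans hAB))
  rw [Real.norm_eq_abs, Real.norm_eq_abs] at this
  have h3 := (abs_le.1 this).2
  have h4 := neg_abs_le (B ^ (-β) - A ^ (-β))
  have h5 : |B - A| = B - A := abs_of_nonneg (by linarith)
  rw [h5] at this
  nlinarith [abs_nonneg (B ^ (-β) - A ^ (-β)), le_abs_self (A ^ (-β) - B ^ (-β)),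
    abs_sub_comm (B ^ (-β)) (A ^ (-β))]

end aux

open Filter in
set_option maxHeartbeats 1600000 in
/-- sup_{x₁ ∈ [0, ℓ_ε)} |H_ε(μ_ε(x₁)) − H₀(μ₀(x₁))| → 0 as ε → 0⁺,
where H_ε(s) = κ|s|^{1+α} + ε and μ_ε is the inverse of
ρ_ε(ξ₁) = ∫_δ^{ξ₁} ds/H_ε(s) on [0, ℓ_ε). -/
theorem stmt_8 (κ α δ : ℝ) (hκ : 0 < κ) (hα : 0 < α) (hδ : δ < 0)
    (xhat : ℝ) (hxhat : xhat = (α * κ)⁻¹ * |δ| ^ (-α))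
    (ℓ : ℝ → ℝ)
    (hℓ : ∀ ε, 0 < ε → ℓ ε = ∫ s in δ..(0 : ℝ), 1 / (κ * |s| ^ (1 + α) + ε))
    (μ : ℝ → ℝ → ℝ)
    (hμ0 : ∀ x₁, μ 0 x₁ = -((α * κ) ^ (-(1 / α)) * (x₁ + xhat) ^ (-(1 / α))))
    (hμ : ∀ ε, 0 < ε → ∀ x₁ ∈ Ico (0 : ℝ) (ℓ ε),
      μ ε x₁ ∈ Ico δ 0 ∧ (∫ s in δ..(μ ε x₁), 1 / (κ * |s| ^ (1 + α) + ε)) = x₁) :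
    ∀ η > (0 : ℝ), ∃ ε₀ > (0 : ℝ), ∀ ε, 0 < ε → ε < ε₀ →
      ∀ x₁ ∈ Ico (0 : ℝ) (ℓ ε),
        |(κ * |μ ε x₁| ^ (1 + α) + ε) - κ * |μ 0 x₁| ^ (1 + α)| < η := by
  intro η hη
  set β : ℝ := (1 + α) / α with hβdef
  have hβ : 0 < β := by positivity
  have hδ' : (0:ℝ) < -δ := by linarith
  have hακ : 0 < α * κ := by positivity
  have hA0pos : (0:ℝ) < (-δ) ^ (-α) := Real.rpow_pos_of_pos hδ' _
  have habsδ : |δ| = -δ := abs_of_neg hδ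
  have hxhat' : α * κ * xhat = (-δ) ^ (-α) := by
    rw [hxhat, habsδ]; field_simp
  have hxhatpos : 0 < xhat := by
    rw [hxhat, habsδ]; exact mul_pos (inv_pos.2 hακ) hA0pos
  -- inverse identities
  have hinv : ∀ w : ℝ, 0 < w → (w ^ (-(1/α))) ^ (-α) = w := by
    intro w hw
    rw [← Real.rpow_mul hw.le, show (-(1/α)) * (-α) = 1 by field_simp, Real.rpow_one]
  have hpow_beta : ∀ w : ℝ, 0 < w → (w ^ (-(1/α))) ^ (1 + α) = w ^ (-β) := by
    intro w hw
    rw [← Real.rpow_mul hw.le, hβdef]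
    congr 1
    field_simp
  have hneg_beta : ∀ w : ℝ, 0 < w → (w ^ (-α)) ^ (-β) = w ^ (1 + α) := by
    intro w hw
    rw [← Real.rpow_mul hw.le, hβdef]
    congr 1
    field_simp
  -- choose M with tail value small
  have htend : Tendsto (fun x : ℝ => κ * (α * κ * (x + xhat)) ^ (-β)) atTop (nhds 0) := by
    have h1 : Tendsto (fun x : ℝ => α * κ * (x + xhat)) atTop atTop :=
      (tendsto_atTop_add_const_right atTop xhat tendsto_id).const_mul_atTop hακ
    simpa using ((tendsto_rpow_neg_atTop hβ).comp h1).const_mul κ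
  obtain ⟨M, hM0, hMη⟩ : ∃ M : ℝ, 0 ≤ M ∧ κ * (α * κ * (M + xhat)) ^ (-β) < η / 2 := by
    obtain ⟨M, hM⟩ := ((eventually_ge_atTop (0:ℝ)).and
      (htend.eventually_lt_const (by linarith : (0:ℝ) < η/2))).exists
    exact ⟨M, hM.1, hM.2⟩
  have hAM1 : 0 < α * κ * (M + 1 + xhat) := mul_pos hακ (by linarith)
  set c : ℝ := (α * κ * (M + 1 + xhat)) ^ (-(1/α)) with hcdef
  have hcpos : 0 < c := Real.rpow_pos_of_pos hAM1 _
  have hcα : c ^ (-α) = α * κ * (M + 1 + xhat) := hinv _ hAM1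
  have hcδ : c ≤ -δ := by
    have h1 : (-δ) ^ (-α) ≤ α * κ * (M + 1 + xhat) := by
      rw [← hxhat']
      exact mul_le_mul_of_nonneg_left (by linarith) hακ.le
    have h2 : (α * κ * (M + 1 + xhat)) ^ (-(1/α)) ≤ ((-δ) ^ (-α)) ^ (-(1/α)) :=
      Real.rpow_le_rpow_of_nonpos hA0pos h1 (by rw [neg_nonpos]; positivity)
    calc c ≤ ((-δ) ^ (-α)) ^ (-(1/α)) := h2
      _ = -δ := by
          rw [← Real.rpow_mul hδ'.le, show (-α) * (-(1/α)) = 1 by field_simp, Real.rpow_one]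
  have hδc : δ ≤ -c := by linarith
  have hcneg : -c < 0 := by linarith
  set D0 : ℝ := κ * c ^ (1 + α) with hD0def
  have hD0pos : 0 < D0 := by
    have := Real.rpow_pos_of_pos hcpos (1 + α); positivity
  set S : ℝ := (-δ) / (D0 * D0) with hSdef
  have hSpos : 0 < S := by positivity
  set L : ℝ := β * ((-δ) ^ (-α)) ^ (-β - 1) with hLdef
  have hLpos : 0 < L := by
    have := Real.rpow_pos_of_pos hA0pos (-β - 1); positivity
  set e3 : ℝ := η / (1 + κ * L * (α * κ) * S) with he3def
  have he3pos : 0 < e3 := by positivity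
  refine ⟨min (η/2) (min (1/S) e3), by positivity, ?_⟩
  intro ε hε hεlt x hx
  have hεη : ε < η / 2 := lt_of_lt_of_le hεlt (min_le_left _ _)
  have hεS : ε * S < 1 := by
    have h1 : ε < 1/S := lt_of_lt_of_le hεlt ((min_le_right _ _).trans (min_le_left _ _))
    rw [lt_div_iff₀ hSpos] at h1; linarith
  have hεe3 : ε < e3 := lt_of_lt_of_le hεlt ((min_le_right _ _).trans (min_le_right _ _))
  obtain ⟨hμmem, hint⟩ := hμ ε hε x hx
  have hx0 : 0 ≤ x := hx.1
  have hμneg : μ ε x < 0 := hμmem.2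
  have hμδ : δ ≤ μ ε x := hμmem.1
  set u : ℝ := -(μ ε x) with hudef
  have hu0 : 0 < u := by rw [hudef]; linarith
  have habsu : |μ ε x| = u := abs_of_neg hμneg
  have hAx : 0 < α * κ * (x + xhat) := mul_pos hακ (by linarith)
  have hveq : -(μ 0 x) = (α * κ * (x + xhat)) ^ (-(1/α)) := by
    rw [hμ0 x, neg_neg, ← Real.mul_rpow hακ.le (by linarith : (0:ℝ) ≤ x + xhat)]
  set v : ℝ := -(μ 0 x) with hvdef
  have hv0 : 0 < v := by rw [hveq]; exact Real.rpow_pos_of_pos hAx _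
  have habsv : |μ 0 x| = v := abs_of_neg (by linarith)
  have hvα : v ^ (-α) = α * κ * (x + xhat) := by rw [hveq]; exact hinv _ hAx
  have hA0le : (-δ) ^ (-α) ≤ α * κ * (x + xhat) := by
    rw [← hxhat']
    have := mul_le_mul_of_nonneg_left (by linarith : xhat ≤ x + xhat) hακ.le
    linarith
  -- general comparison: x ≤ ρ₀(μ ε x)
  have hxle : x ≤ (u ^ (-α) - (-δ) ^ (-α)) / (α * κ) := by
    have h1 := rho_mono_eps hκ hα hε hμδ hμneg
    rw [hint, rho0_eq hκ hα hμδ hμneg] at h1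
    exact h1
  have hBineq : α * κ * x + (-δ) ^ (-α) ≤ u ^ (-α) := by
    rw [le_div_iff₀ hακ] at hxle; linarith
  have hAvBv : v ^ (-α) ≤ u ^ (-α) := by
    rw [hvα]; linarith
  have huv : u ≤ v := by
    by_contra h
    push_neg at h
    have := Real.rpow_lt_rpow_of_neg hv0 h (by linarith : -α < 0)
    linarith
  have hv_up : u ^ (1 + α) ≤ v ^ (1 + α) :=
    Real.rpow_le_rpow hu0.le huv (by positivity)
  have hvpow : v ^ (1 + α) = (α * κ * (x + xhat)) ^ (-β) := by
    rw [hveq]; exact hpow_beta _ hAx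
  rw [habsu, habsv]
  have hSform : (-δ) * (ε / (D0 * D0)) = ε * S := by
    rw [hSdef]; field_simp
  by_cases hxM : x ≤ M
  · -- bounded region
    have hμc : μ ε x ≤ -c := by
      by_contra h
      push_neg at h
      have hie : IntervalIntegrable (fun s : ℝ => 1 / (κ * |s| ^ (1+α) + ε)) volume δ (-c) :=
        (cont_fe hκ hα hε).intervalIntegrable _ _
      have hie2 : IntervalIntegrable (fun s : ℝ => 1 / (κ * |s| ^ (1+α) + ε)) volume (-c) (μ ε x) :=
        (cont_fe hκ hα hε).intervalIntegrable _ _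
      have hadd := intervalIntegral.integral_add_adjacent_intervals hie hie2
      have hnn : 0 ≤ ∫ s in (-c)..(μ ε x), 1 / (κ * |s| ^ (1+α) + ε) := by
        apply intervalIntegral.integral_nonneg h.le
        intro s _
        have h1 : (0:ℝ) ≤ |s| ^ (1 + α) := Real.rpow_nonneg (abs_nonneg s) _
        positivity
      have hsplit : (∫ s in δ..(-c), 1 / (κ * |s| ^ (1+α) + ε)) ≤ x := by
        rw [← hint]; linarith
      have herr := err_le hκ hα hε hcpos hδ hδc (le_refl (-c))
      have hrho0c : (∫ s in δ..(-c), 1 / (κ * |s| ^ (1 + α))) = M + 1 := by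
        rw [rho0_eq hκ hα hδc hcneg, neg_neg, hcα, ← hxhat']
        field_simp
        ring
      rw [hrho0c, hSform] at herr
      linarith
    have hcu : c ≤ u := by rw [hudef]; linarith
    -- error estimate at μ ε x
    have herr2 := err_le hκ hα hε hcpos hδ hμδ hμc
    rw [hint, hSform, rho0_eq hκ hα hμδ hμneg] at herr2
    set Av : ℝ := α * κ * (x + xhat) with hAvdef
    set Bv : ℝ := u ^ (-α) with hBvdef
    have hAvpos : 0 < Av := hAx
    have hBvle : Bv ≤ Av + (α * κ) * (ε * S) := by
      have h2 : (u ^ (-α) - (-δ) ^ (-α)) / (α * κ) ≤ x + ε * S := by linarith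
      rw [div_le_iff₀ hακ] at h2
      have h3 : α * κ * xhat = (-δ) ^ (-α) := hxhat'
      rw [hBvdef, hAvdef]
      linarith [h2, h3]
    have hAvBv' : Av ≤ Bv := by rw [← hvα]; exact hAvBv
    have hlip := lip_rpow hA0pos hβ hA0le hAvBv'
    have hmono : Bv ^ (-β) ≤ Av ^ (-β) :=
      Real.rpow_le_rpow_of_nonpos hAvpos hAvBv' (by linarith)
    have hupow : u ^ (1 + α) = Bv ^ (-β) := by
      rw [hBvdef, hneg_beta u hu0]
    rw [hupow, hvpow]
    rw [abs_lt]
    have hLbd : Av ^ (-β) - Bv ^ (-β) ≤ L * ((α * κ) * (ε * S)) := by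
      have h2 : Bv - Av ≤ (α * κ) * (ε * S) := by linarith
      have h4 := mul_le_mul_of_nonneg_left h2 hLpos.le
      have h5 : β * ((-δ) ^ (-α)) ^ (-β - 1) * (Bv - Av) = L * (Bv - Av) := by rw [hLdef]
      linarith [hlip, h4, h5]
    have he3' : ε * (1 + κ * L * (α * κ) * S) < η := by
      rw [he3def, lt_div_iff₀ (by positivity)] at hεe3
      exact hεe3
    constructor
    · have hk1 := mul_le_mul_of_nonneg_left hLbd hκ.le
      linarith [hk1, he3', hε]
    · have := mul_le_mul_of_nonneg_left hmono hκ.le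
      linarith
  · -- tail region
    push_neg at hxM
    have hH0 : κ * v ^ (1 + α) < η / 2 := by
      rw [hvpow]
      have h1 : α * κ * (M + xhat) ≤ α * κ * (x + xhat) :=
        mul_le_mul_of_nonneg_left (by linarith) hακ.le
      have h2 : (α * κ * (x + xhat)) ^ (-β) ≤ (α * κ * (M + xhat)) ^ (-β) :=
        Real.rpow_le_rpow_of_nonpos (mul_pos hακ (by linarith)) h1 (by linarith)
      have h3 := mul_le_mul_of_nonneg_left h2 hκ.le
      linarith
    have hupos : 0 ≤ κ * u ^ (1 + α) := by
      have := Real.rpow_nonneg hu0.le (1 + α); positivity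
    have hkuv : κ * u ^ (1 + α) ≤ κ * v ^ (1 + α) :=
      mul_le_mul_of_nonneg_left hv_up hκ.le
    rw [abs_lt]
    constructor
    · linarith
    · linarith
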